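/- Suppose ρ ∈ (0,1), Δ ∈ ℝ with Δ ≥ 2ρ - 1 + 2λ for some λ ≥ 0 (i.e., there is another element of posterior λ in S₀ along with j). Then for 0 < p < 1/2, q = 1-p: log₂(2q) - log₂(1 + (q-p)·(Δ-ρ)/(1-ρ)) < C₂ = log₂(q/p) whenever λ > 0, and equality holds iff Δ = 2ρ - 1 (the singleton case). -/

import Mathlib

theorem nonsingleton_step_lt_C2 (p q C₂ ρ lam Δ : ℝ)
    (hp0 : 0 < p) (hp2 : p < 1/2) (hq : q = 1 - p)
    (hC2 : C₂ = Real.logb 2 (q/p))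
    (hρ0 : 0 < ρ) (hρ1 : ρ < 1) (hlam : 0 ≤ lam)
    (hΔ : Δ ≥ 2*ρ - 1 + 2*lam) :
    (0 < lam →
      Real.logb 2 (2*q) - Real.logb 2 (1 + (q-p) * (Δ - ρ) / (1 - ρ)) < C₂) ∧
    (Real.logb 2 (2*q) - Real.logb 2 (1 + (q-p) * (Δ - ρ) / (1 - ρ)) = C₂
      ↔ Δ = 2*ρ - 1) := by
  have hqp : 0 < q - p := by simp [hq]; linarith
  have hq0 : 0 < q := by linarith
  have hr : 0 < 1 - ρ := by linarith
  set X := 1 + (q-p) * (Δ - ρ) / (1 - ρ) with hXdef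
  have hX : X = 2*p + (q-p) * (Δ - (2*ρ-1)) / (1-ρ) := by
    rw [hXdef, hq]; field_simp [hr.ne']; ring
  have hX2p : X ≥ 2*p := by
    rw [hX]
    have : 0 ≤ (q-p) * (Δ - (2*ρ-1)) / (1-ρ) :=
      div_nonneg (mul_nonneg hqp.le (by linarith)) hr.le
    linarith
  have hXpos : 0 < X := by linarith
  have h2q : (0:ℝ) < 2*q := by linarith
  -- rewrite C₂
  have key : Real.logb 2 (2*q) - Real.logb 2 X - C₂ = Real.logb 2 X⁻¹ - Real.logb 2 (2*p)⁻¹ := by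
    rw [hC2, Real.logb_inv, Real.logb_inv, hq]
    rw [show (2:ℝ)*(1-p) = (2*(1-p)) from rfl]
    rw [Real.logb_div (by linarith : (1:ℝ)-p ≠ 0) hp0.ne',
        show (2:ℝ)*p = 2*p from rfl]
    rw [Real.logb_mul (by norm_num : (2:ℝ) ≠ 0) (by linarith : (1:ℝ)-p ≠ 0),
        Real.logb_mul (by norm_num : (2:ℝ) ≠ 0) hp0.ne']
    ring
  have hXiff : Δ = 2*ρ-1 ↔ X = 2*p := by
    rw [hX]
    constructor
    · intro h; rw [h]; simp
    · intro h
      have : (q-p) * (Δ - (2*ρ-1)) / (1-ρ) = 0 := by linarith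
      have h2 : (q-p) * (Δ - (2*ρ-1)) = 0 := by
        field_simp at this; linarith
      rcases mul_eq_zero.1 h2 with h3 | h3
      · linarith
      · linarith
  constructor
  · intro hl
    have hXgt : 2*p < X := by
      rw [hX]
      have : 0 < (q-p) * (Δ - (2*ρ-1)) / (1-ρ) :=
        div_pos (mul_pos hqp (by linarith)) hr
      linarith
    have : Real.logb 2 X⁻¹ < Real.logb 2 (2*p)⁻¹ :=
      Real.logb_lt_logb (by norm_num) (by positivity) (by
        exact inv_strictAnti₀ (by linarith) hXgt)
    linarith [key]
  · constructor
    · intro h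
      have h0 : Real.logb 2 X⁻¹ = Real.logb 2 (2*p)⁻¹ := by linarith [key]
      have : X⁻¹ = (2*p)⁻¹ := by
        have := Real.logb_injOn_pos (b := 2) (by norm_num)
          (Set.mem_Ioi.2 (by positivity : (0:ℝ) < X⁻¹))
          (Set.mem_Ioi.2 (by positivity : (0:ℝ) < (2*p)⁻¹)) h0
        exact this
      have hXeq : X = 2*p := by
        have := congrArg Inv.inv this
        simpa using this
      exact hXiff.2 hXeq
    · intro h
      have hXeq : X = 2*p := hXiff.1 h
      rw [hXeq] at key ⊢
      linarith [key]
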